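/- Let (C,∂) be a finitely generated free chain complex over R = F₂[U,V,U⁻¹,V⁻¹], and let B and B' be two bases of C over R. Then Φ_B and Φ_{B'} are R-equivariantly chain homotopic, and similarly Ψ_B and Ψ_{B'} are R-equivariantly chain homotopic. That is, the chain homotopy classes of the formal derivatives of the differential do not depend on the choice of basis. -/

import Mathlib

open Finsupp

noncomputable section

abbrev F2 : Type := ZMod 2

/-- The Laurent polynomial ring `F₂[U,V,U⁻¹,V⁻¹]`, realized as the monoid algebra
of `ℤ × ℤ` over `F₂`; `U` corresponds to `(1,0)` and `V` to `(0,1)`. -/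
abbrev R2 : Type := AddMonoidAlgebra F2 (ℤ × ℤ)

/-- Formal derivative of a Laurent polynomial with respect to `U`. -/
def dU (f : R2) : R2 :=
  AddMonoidAlgebra.ofCoeff (Finsupp.sum f.coeff fun mn c => Finsupp.single (mn.1 - 1, mn.2) ((mn.1 : F2) * c))

/-- Formal derivative of a Laurent polynomial with respect to `V`. -/
def dV (f : R2) : R2 :=
  AddMonoidAlgebra.ofCoeff (Finsupp.sum f.coeff fun mn c => Finsupp.single (mn.1, mn.2 - 1) ((mn.2 : F2) * c))

/-- The `R2`-linear map `(B →₀ R2) →ₗ (B' →₀ R2)` determined by its values on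
the standard basis. -/
def bmap {B B' : Type} (v : B → (B' →₀ R2)) : (B →₀ R2) →ₗ[R2] (B' →₀ R2) :=
  Finsupp.lsum R2 fun x => LinearMap.toSpanSingleton R2 _ (v x)

/-- The matrix entry `P_{x y}` of a linear map with respect to the standard bases. -/
def matOf {B B' : Type} (f : (B →₀ R2) →ₗ[R2] (B' →₀ R2)) (x : B) (y : B') : R2 :=
  f (Finsupp.single x 1) y

/-- Apply `g : R2 → R2` to each matrix entry of `f`. -/
def entrywise {B B' : Type} [Finite B'] (g : R2 → R2)
    (f : (B →₀ R2) →ₗ[R2] (B' →₀ R2)) : (B →₀ R2) →ₗ[R2] (B' →₀ R2) :=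
  bmap fun x => Finsupp.equivFunOnFinite.symm fun y => g (matOf f x y)

/-- `Φ_B`, the formal derivative of the differential with respect to `U`. -/
def PhiB {B : Type} [Finite B] (d : (B →₀ R2) →ₗ[R2] (B →₀ R2)) :
    (B →₀ R2) →ₗ[R2] (B →₀ R2) :=
  entrywise dU d

/-- `Ψ_B`, the formal derivative of the differential with respect to `V`. -/
def PsiB {B : Type} [Finite B] (d : (B →₀ R2) →ₗ[R2] (B →₀ R2)) :
    (B →₀ R2) →ₗ[R2] (B →₀ R2) :=
  entrywise dV d
/-- `Φ_b` for an abstract finitely generated free `R2`-module with basis `b`: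
the formal `U`-derivative of the differential computed in the basis `b`. -/
def phiOf {C : Type} [AddCommGroup C] [Module R2 C] {ι : Type} [Fintype ι]
    (b : Module.Basis ι R2 C) (d : C →ₗ[R2] C) : C →ₗ[R2] C :=
  b.repr.symm.toLinearMap ∘ₗ
    PhiB (b.repr.toLinearMap ∘ₗ d ∘ₗ b.repr.symm.toLinearMap) ∘ₗ b.repr.toLinearMap

/-- `Ψ_b` for an abstract finitely generated free `R2`-module with basis `b`. -/
def psiOf {C : Type} [AddCommGroup C] [Module R2 C] {ι : Type} [Fintype ι]
    (b : Module.Basis ι R2 C) (d : C →ₗ[R2] C) : C →ₗ[R2] C :=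
  b.repr.symm.toLinearMap ∘ₗ
    PsiB (b.repr.toLinearMap ∘ₗ d ∘ₗ b.repr.symm.toLinearMap) ∘ₗ b.repr.toLinearMap

lemma dU_zero : dU 0 = 0 := congrArg AddMonoidAlgebra.ofCoeff Finsupp.sum_zero_index

lemma dU_add (f g : R2) : dU (f + g) = dU f + dU g :=
  congrArg AddMonoidAlgebra.ofCoeff <| Finsupp.sum_add_index' (by simp) (by intros; simp [mul_add, Finsupp.single_add])

lemma dU_single (mn : ℤ × ℤ) (c : F2) :
    dU (AddMonoidAlgebra.single mn c) = AddMonoidAlgebra.single (mn.1 - 1, mn.2) ((mn.1 : F2) * c) :=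
  congrArg AddMonoidAlgebra.ofCoeff (Finsupp.sum_single_index (by simp))

lemma dU_one : dU 1 = 0 := by
  rw [AddMonoidAlgebra.one_def, dU_single]; simp

lemma dU_mul (f g : R2) : dU (f * g) = dU f * g + f * dU g := by
  induction f using AddMonoidAlgebra.induction_linear with
  | zero => simp [dU_zero]
  | add f1 f2 h1 h2 => rw [add_mul, dU_add, h1, h2, dU_add, add_mul, add_mul]; ring
  | single a c =>
    induction g using AddMonoidAlgebra.induction_linear with
    | zero => simp [dU_zero]
    | add g1 g2 h1 h2 => rw [mul_add, dU_add, h1, h2, dU_add, mul_add, mul_add]; ring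
    | single b e =>
      rw [AddMonoidAlgebra.single_mul_single, dU_single, dU_single, dU_single,
        AddMonoidAlgebra.single_mul_single, AddMonoidAlgebra.single_mul_single]
      have hp1 : ((a.1 - 1, a.2) : ℤ × ℤ) + b = ((a + b).1 - 1, (a + b).2) := by
        simp [Prod.ext_iff]; ring
      have hp2 : a + ((b.1 - 1, b.2) : ℤ × ℤ) = ((a + b).1 - 1, (a + b).2) := by
        simp [Prod.ext_iff]; ring
      rw [hp1, hp2, ← AddMonoidAlgebra.single_add]
      congr 1
      rw [Prod.fst_add]; push_cast
      ring

lemma dV_zero : dV 0 = 0 := congrArg AddMonoidAlgebra.ofCoeff Finsupp.sum_zero_index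

lemma dV_add (f g : R2) : dV (f + g) = dV f + dV g :=
  congrArg AddMonoidAlgebra.ofCoeff <| Finsupp.sum_add_index' (by simp) (by intros; simp [mul_add, Finsupp.single_add])

lemma dV_single (mn : ℤ × ℤ) (c : F2) :
    dV (AddMonoidAlgebra.single mn c) = AddMonoidAlgebra.single (mn.1, mn.2 - 1) ((mn.2 : F2) * c) :=
  congrArg AddMonoidAlgebra.ofCoeff (Finsupp.sum_single_index (by simp))

lemma dV_one : dV 1 = 0 := by
  rw [AddMonoidAlgebra.one_def, dV_single]; simp

lemma dV_mul (f g : R2) : dV (f * g) = dV f * g + f * dV g := by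
  induction f using AddMonoidAlgebra.induction_linear with
  | zero => simp [dV_zero]
  | add f1 f2 h1 h2 => rw [add_mul, dV_add, h1, h2, dV_add, add_mul, add_mul]; ring
  | single a c =>
    induction g using AddMonoidAlgebra.induction_linear with
    | zero => simp [dV_zero]
    | add g1 g2 h1 h2 => rw [mul_add, dV_add, h1, h2, dV_add, mul_add, mul_add]; ring
    | single b e =>
      rw [AddMonoidAlgebra.single_mul_single, dV_single, dV_single, dV_single,
        AddMonoidAlgebra.single_mul_single, AddMonoidAlgebra.single_mul_single]
      have hp1 : ((a.1, a.2 - 1) : ℤ × ℤ) + b = ((a + b).1, (a + b).2 - 1) := by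
        simp [Prod.ext_iff]; ring
      have hp2 : a + ((b.1, b.2 - 1) : ℤ × ℤ) = ((a + b).1, (a + b).2 - 1) := by
        simp [Prod.ext_iff]; ring
      rw [hp1, hp2, ← AddMonoidAlgebra.single_add]
      congr 1
      rw [Prod.snd_add]; push_cast
      ring

lemma bmap_single {B B' : Type} (v : B → (B' →₀ R2)) (x : B) (c : R2) :
    bmap v (Finsupp.single x c) = c • v x := by
  simp [bmap]

lemma matOf_ext {B B' : Type} {f g : (B →₀ R2) →ₗ[R2] (B' →₀ R2)}
    (h : ∀ x y, matOf f x y = matOf g x y) : f = g := by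
  apply Finsupp.lhom_ext'
  intro x
  apply LinearMap.ext_ring
  apply Finsupp.ext
  intro y
  simpa [matOf] using h x y

lemma matOf_entrywise {B B' : Type} [Finite B'] (g : R2 → R2)
    (f : (B →₀ R2) →ₗ[R2] (B' →₀ R2)) (x : B) (y : B') :
    matOf (entrywise g f) x y = g (matOf f x y) := by
  simp [entrywise, matOf, bmap_single]

lemma matOf_comp {B B' B'' : Type} [Fintype B'] (f : (B →₀ R2) →ₗ[R2] (B' →₀ R2))
    (g : (B' →₀ R2) →ₗ[R2] (B'' →₀ R2)) (x : B) (z : B'') :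
    matOf (g ∘ₗ f) x z = ∑ y, matOf f x y * matOf g y z := by
  have h1 : f (Finsupp.single x 1) = ∑ y, Finsupp.single y (matOf f x y) := by
    rw [← Finsupp.sum_single (f (Finsupp.single x 1)), Finsupp.sum_fintype]
    · rfl
    · simp
  have : matOf (g ∘ₗ f) x z = (g (f (Finsupp.single x 1))) z := rfl
  rw [this, h1, map_sum]
  rw [Finsupp.finset_sum_apply]
  congr 1
  ext y
  have : Finsupp.single y (matOf f x y) = (matOf f x y) • Finsupp.single y (1 : R2) := by
    simp
  rw [this, map_smul]
  simp [matOf]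

lemma entrywise_comp (δ : R2 → R2)
    (hδadd : ∀ a b, δ (a + b) = δ a + δ b)
    (hδmul : ∀ a b, δ (a * b) = δ a * b + a * δ b)
    {B B' B'' : Type} [Fintype B'] [Finite B'']
    (f : (B →₀ R2) →ₗ[R2] (B' →₀ R2)) (g : (B' →₀ R2) →ₗ[R2] (B'' →₀ R2)) :
    entrywise δ (g ∘ₗ f) = entrywise δ g ∘ₗ f + g ∘ₗ entrywise δ f := by
  apply matOf_ext
  intro x z
  have hadd : matOf (entrywise δ g ∘ₗ f + g ∘ₗ entrywise δ f) x z =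
      matOf (entrywise δ g ∘ₗ f) x z + matOf (g ∘ₗ entrywise δ f) x z := by
    simp [matOf]
  rw [hadd, matOf_entrywise, matOf_comp, matOf_comp, matOf_comp]
  rw [show δ (∑ y, matOf f x y * matOf g y z) = ∑ y, δ (matOf f x y * matOf g y z) from
    map_sum (AddMonoidHom.mk' δ hδadd) _ _, ← Finset.sum_add_distrib]
  apply Finset.sum_congr rfl
  intro y _
  show δ (matOf f x y * matOf g y z) = _
  rw [hδmul, matOf_entrywise, matOf_entrywise]
  ring

lemma entrywise_id (δ : R2 → R2) (hδ0 : δ 0 = 0) (hδ1 : δ 1 = 0)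
    {B : Type} [Finite B] :
    entrywise δ (LinearMap.id : (B →₀ R2) →ₗ[R2] (B →₀ R2)) = 0 := by
  classical
  apply matOf_ext
  intro x y
  rw [matOf_entrywise]
  have h0 : matOf (0 : (B →₀ R2) →ₗ[R2] (B →₀ R2)) x y = 0 := by simp [matOf]
  rw [h0]
  have : matOf (LinearMap.id : (B →₀ R2) →ₗ[R2] (B →₀ R2)) x y =
      Finsupp.single x (1 : R2) y := rfl
  rw [this, Finsupp.single_apply]
  by_cases h : x = y <;> simp [h, hδ0, hδ1]

def derOf (δ : R2 → R2) {C : Type} [AddCommGroup C] [Module R2 C] {ι ι' : Type}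
    [Finite ι'] (b : Module.Basis ι R2 C) (b' : Module.Basis ι' R2 C) (f : C →ₗ[R2] C) :
    C →ₗ[R2] C :=
  b'.repr.symm.toLinearMap ∘ₗ
    entrywise δ (b'.repr.toLinearMap ∘ₗ f ∘ₗ b.repr.symm.toLinearMap) ∘ₗ b.repr.toLinearMap

lemma derOf_comp (δ : R2 → R2)
    (hδadd : ∀ a b, δ (a + b) = δ a + δ b)
    (hδmul : ∀ a b, δ (a * b) = δ a * b + a * δ b)
    {C : Type} [AddCommGroup C] [Module R2 C] {ι ι' ι'' : Type}
    [Fintype ι'] [Finite ι'']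
    (b : Module.Basis ι R2 C) (b' : Module.Basis ι' R2 C) (b'' : Module.Basis ι'' R2 C)
    (f g : C →ₗ[R2] C) :
    derOf δ b b'' (g ∘ₗ f) = derOf δ b' b'' g ∘ₗ f + g ∘ₗ derOf δ b b' f := by
  have key : b''.repr.toLinearMap ∘ₗ (g ∘ₗ f) ∘ₗ b.repr.symm.toLinearMap =
      (b''.repr.toLinearMap ∘ₗ g ∘ₗ b'.repr.symm.toLinearMap) ∘ₗ
      (b'.repr.toLinearMap ∘ₗ f ∘ₗ b.repr.symm.toLinearMap) := by
    apply LinearMap.ext; intro x; simp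
  unfold derOf
  rw [key, entrywise_comp δ hδadd hδmul]
  apply LinearMap.ext; intro x
  simp

lemma derOf_id (δ : R2 → R2) (hδ0 : δ 0 = 0) (hδ1 : δ 1 = 0)
    {C : Type} [AddCommGroup C] [Module R2 C] {ι : Type} [Finite ι]
    (b : Module.Basis ι R2 C) :
    derOf δ b b LinearMap.id = 0 := by
  have key : b.repr.toLinearMap ∘ₗ LinearMap.id ∘ₗ b.repr.symm.toLinearMap =
      (LinearMap.id : (ι →₀ R2) →ₗ[R2] (ι →₀ R2)) := by
    apply LinearMap.ext; intro x; simp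
  unfold derOf
  rw [key, entrywise_id δ hδ0 hδ1]
  simp

lemma char2 {C : Type} [AddCommGroup C] [Module R2 C] (f : C →ₗ[R2] C) :
    f + f = 0 := by
  have h2 : (1 + 1 : R2) = 0 := by
    have : (1 + 1 : F2) = 0 := by decide
    rw [AddMonoidAlgebra.one_def, ← AddMonoidAlgebra.single_add, this, AddMonoidAlgebra.single_zero]
  calc f + f = (1 + 1 : R2) • f := by rw [add_smul, one_smul]
    _ = 0 := by rw [h2, zero_smul]

lemma homotopy_of_der (δ : R2 → R2) (hδ0 : δ 0 = 0) (hδ1 : δ 1 = 0)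
    (hδadd : ∀ a b, δ (a + b) = δ a + δ b)
    (hδmul : ∀ a b, δ (a * b) = δ a * b + a * δ b)
    {C : Type} [AddCommGroup C] [Module R2 C] {ι ι' : Type}
    [Fintype ι] [Fintype ι'] (b : Module.Basis ι R2 C) (b' : Module.Basis ι' R2 C)
    (d : C →ₗ[R2] C) :
    derOf δ b b d + derOf δ b' b' d =
      d ∘ₗ derOf δ b b' LinearMap.id + derOf δ b b' LinearMap.id ∘ₗ d := by
  set E := derOf δ b b' LinearMap.id with hE
  set E' := derOf δ b' b LinearMap.id with hE'
  have hEE : E' = E := by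
    have h := derOf_comp δ hδadd hδmul b b' b LinearMap.id LinearMap.id
    rw [LinearMap.id_comp, derOf_id δ hδ0 hδ1, LinearMap.comp_id, ← hE, ← hE'] at h
    have := congrArg (fun z => z + E) h.symm
    simpa [add_assoc, char2] using this
  have h1 : derOf δ b' b' d = E ∘ₗ d + derOf δ b' b d := by
    have h := derOf_comp δ hδadd hδmul b' b b' d LinearMap.id
    rw [LinearMap.id_comp, LinearMap.id_comp] at h
    rw [h, ← hE]
  have h2 : derOf δ b' b d = derOf δ b b d + d ∘ₗ E := by
    have h := derOf_comp δ hδadd hδmul b' b b LinearMap.id d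
    rw [LinearMap.comp_id, LinearMap.comp_id, ← hE', hEE] at h
    exact h
  rw [h1, h2]
  calc derOf δ b b d + (E ∘ₗ d + (derOf δ b b d + d ∘ₗ E))
      = (derOf δ b b d + derOf δ b b d) + (d ∘ₗ E + E ∘ₗ d) := by abel
    _ = d ∘ₗ E + E ∘ₗ d := by rw [char2, zero_add]

/-- for two bases `B`, `B'` of the same finitely generated free
chain complex `(C,∂)` over `R = F₂[U,V,U⁻¹,V⁻¹]`, the maps `Φ_B` and `Φ_{B'}`
are `R`-equivariantly chain homotopic, and likewise `Ψ_B` and `Ψ_{B'}`. -/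
theorem stmt5 {C : Type} [AddCommGroup C] [Module R2 C] {ι ι' : Type}
    [Fintype ι] [Fintype ι'] (b : Module.Basis ι R2 C) (b' : Module.Basis ι' R2 C)
    (d : C →ₗ[R2] C) (hd : d ∘ₗ d = 0) :
    (∃ H : C →ₗ[R2] C, phiOf b d + phiOf b' d = d ∘ₗ H + H ∘ₗ d) ∧
    (∃ H : C →ₗ[R2] C, psiOf b d + psiOf b' d = d ∘ₗ H + H ∘ₗ d) := by
  constructor
  · exact ⟨derOf dU b b' LinearMap.id, homotopy_of_der dU dU_zero dU_one dU_add dU_mul b b' d⟩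
  · exact ⟨derOf dV b b' LinearMap.id, homotopy_of_der dV dV_zero dV_one dV_add dV_mul b b' d⟩

end
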